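/- Let p be a nonzero point of the Euclidean plane ℝ² and let λ be a real number with 0 < λ < 1. Then for every nonzero point m with ‖m − p‖ = λ‖m‖, the angle between the vectors m and p (both viewed from the origin) is at most arcsin λ. In other words, every possible interception point lies within the cone of half-angle arcsin λ around the direction from the evader to the pursuer, so the occupied angle of the pursuer equals θ = 2·arcsin λ. -/

import Mathlib

/-- Every possible interception point `m` (with `‖m - p‖ = λ‖m‖`) lies within the cone of
half-angle `arcsin λ` around the direction from the evader (at the origin) to the pursuer
(at `p`); hence the occupied angle of the pursuer equals `2 · arcsin λ`. -/
theorem occupied_angle (p : EuclideanSpace ℝ (Fin 2)) (hp : p ≠ 0)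
    (l : ℝ) (hl0 : 0 < l) (hl1 : l < 1)
    (m : EuclideanSpace ℝ (Fin 2)) (hm : m ≠ 0) (h : ‖m - p‖ = l * ‖m‖) :
    InnerProductGeometry.angle m p ≤ Real.arcsin l := by
  have hmn : (0:ℝ) < ‖m‖ := norm_pos_iff.mpr hm
  have hpn : (0:ℝ) < ‖p‖ := norm_pos_iff.mpr hp
  set c : ℝ := Real.sqrt (1 - l ^ 2) with hc
  have hc0 : 0 ≤ c := Real.sqrt_nonneg _
  have hc2 : c ^ 2 = 1 - l ^ 2 := Real.sq_sqrt (by nlinarith)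
  -- key: 2⟪m,p⟫ = (1 - l²)‖m‖² + ‖p‖²
  have hexp : ‖m - p‖ ^ 2 = ‖m‖ ^ 2 - 2 * inner ℝ m p + ‖p‖ ^ 2 := by
    rw [norm_sub_pow_two_real]
  have hsq : (l * ‖m‖) ^ 2 = ‖m‖ ^ 2 - 2 * inner ℝ m p + ‖p‖ ^ 2 := by
    rw [← h, hexp]
  have hkey : 2 * (inner ℝ m p : ℝ) = (1 - l ^ 2) * ‖m‖ ^ 2 + ‖p‖ ^ 2 := by nlinarith
  have hamgm : (inner ℝ m p : ℝ) ≥ c * (‖m‖ * ‖p‖) := by nlinarith [sq_nonneg (c * ‖m‖ - ‖p‖)]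
  have hmp : (0:ℝ) < ‖m‖ * ‖p‖ := mul_pos hmn hpn
  have hge : c ≤ (inner ℝ m p : ℝ) / (‖m‖ * ‖p‖) := (le_div_iff₀ hmp).mpr hamgm
  have hle1 : (inner ℝ m p : ℝ) / (‖m‖ * ‖p‖) ≤ 1 := by
    rw [div_le_one hmp]
    exact real_inner_le_norm m p
  rw [InnerProductGeometry.angle, Real.arccos_eq_pi_div_two_sub_arcsin,
    sub_le_iff_le_add]
  have h1 : Real.arcsin c ≤ Real.arcsin ((inner ℝ m p : ℝ) / (‖m‖ * ‖p‖)) :=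
    Real.monotone_arcsin hge
  have h2 : Real.arcsin c = Real.pi / 2 - Real.arcsin l := by
    have : c = Real.sin (Real.pi / 2 - Real.arcsin l) := by
      rw [Real.sin_pi_div_two_sub, Real.cos_arcsin]
    rw [this, Real.arcsin_sin]
    · linarith [Real.arcsin_le_pi_div_two l, Real.arcsin_nonneg.2 hl0.le]
    · linarith [Real.arcsin_le_pi_div_two l, Real.arcsin_nonneg.2 hl0.le]
  linarith
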